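/- Let Γ be a distance-regular graph and Π = {C^{(1)},...,C^{(t)}} a completely regular partition with common intersection numbers γ_i, α_i, β_i (0 ≤ i ≤ ρ). Then the quotient graph Γ/Π is distance-regular of diameter ρ with intersection numbers b_i = β_i/γ_1 (0 ≤ i ≤ ρ−1), c_i = γ_i/γ_1 (1 ≤ i ≤ ρ), and a_i = (α_i − α_0)/γ_1; in particular c_1 = 1. -/

import Mathlib

open SimpleGraph

/-- The Hamming graph on `Fin n → Q`: words adjacent iff they differ in one coordinate. -/
def hammingGraph (n : ℕ) (Q : Type*) [DecidableEq Q] : SimpleGraph (Fin n → Q) where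
  Adj x y := hammingDist x y = 1
  symm := Std.Symm.mk fun x y h => by (try simp only at h ⊢); rwa [hammingDist_comm]
  loopless := Std.Irrefl.mk fun x h => by (try simp only at h); rw [hammingDist_self] at h; exact absurd h.symm one_ne_zero

/-- Distance from a vertex to a code, via graph distance. -/
noncomputable def distToCode {V : Type*} (G : SimpleGraph V) (C : Set V) (x : V) : ℕ :=
  sInf {d | ∃ c ∈ C, G.dist x c = d}

/-- The `i`-th cell of the distance partition of a code. -/
noncomputable def codeCell {V : Type*} (G : SimpleGraph V) (C : Set V) (i : ℕ) : Set V :=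
  {x | distToCode G C x = i}

/-- The number of neighbors of `x` lying in `S`. -/
noncomputable def nbrCount {V : Type*} (G : SimpleGraph V) (x : V) (S : Set V) : ℕ :=
  (G.neighborSet x ∩ S).ncard

/-- Covering radius of a code. -/
noncomputable def covRad {V : Type*} (G : SimpleGraph V) (C : Set V) : ℕ :=
  sSup {d | ∃ x, distToCode G C x = d}

/-- A code is completely regular if its distance partition is equitable. -/
def IsCompRegCode {V : Type*} (G : SimpleGraph V) (C : Set V) : Prop :=
  ∀ i j : ℕ, ∀ x ∈ codeCell G C i, ∀ y ∈ codeCell G C i,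
    nbrCount G x (codeCell G C j) = nbrCount G y (codeCell G C j)

/-- Intersection numbers `γ, α, β` of a code with covering radius `ρ`. -/
def HasIntNums {V : Type*} (G : SimpleGraph V) (C : Set V) (ρ : ℕ) (γ α β : ℕ → ℕ) : Prop :=
  γ 0 = 0 ∧ β ρ = 0 ∧
  ∀ i ≤ ρ, ∀ x ∈ codeCell G C i,
    (1 ≤ i → nbrCount G x (codeCell G C (i-1)) = γ i) ∧
    nbrCount G x (codeCell G C i) = α i ∧
    (i < ρ → nbrCount G x (codeCell G C (i+1)) = β i)

/-- Equitable partition of the vertex set of a graph. -/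
def IsEquitable {V : Type*} (G : SimpleGraph V) (Pa : Set (Set V)) : Prop :=
  ∀ P ∈ Pa, ∀ P' ∈ Pa, ∀ x ∈ P, ∀ y ∈ P, nbrCount G x P' = nbrCount G y P'

/-- Quotient graph of a graph by a partition of its vertex set. -/
def quotientGraph {V : Type*} (G : SimpleGraph V) (Pa : Set (Set V)) : SimpleGraph Pa where
  Adj P P' := P ≠ P' ∧ ∃ x ∈ (P : Set V), ∃ y ∈ (P' : Set V), G.Adj x y
  symm := ⟨by
    rintro P P' ⟨hne, x, hx, y, hy, hxy⟩
    exact ⟨hne.symm, y, hy, x, hx, hxy.symm⟩⟩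
  loopless := ⟨by rintro P ⟨hne, -⟩; exact hne rfl⟩

/-- Completely regular partition with common intersection numbers. -/
def IsCompRegPartition {V : Type*} (G : SimpleGraph V) (Pa : Set (Set V))
    (ρ : ℕ) (γ α β : ℕ → ℕ) : Prop :=
  Setoid.IsPartition Pa ∧ IsEquitable G Pa ∧
    ∀ P ∈ Pa, IsCompRegCode G P ∧ covRad G P = ρ ∧ HasIntNums G P ρ γ α β

/-- Distance-regular graph of diameter `D` with intersection arrays `b`, `c`. -/
def IsDistRegular {V : Type*} (G : SimpleGraph V) (D : ℕ) (b c : ℕ → ℕ) : Prop :=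
  G.Connected ∧ (∀ x y : V, G.dist x y ≤ D) ∧ (∃ x y : V, G.dist x y = D) ∧
  ∀ i ≤ D, ∀ x y : V, G.dist x y = i →
    (1 ≤ i → nbrCount G y {z | G.dist x z = i - 1} = c i) ∧
    (i < D → nbrCount G y {z | G.dist x z = i + 1} = b i)

/-- The tridiagonal quotient matrix of a completely regular code. -/
noncomputable def quotMatrix (ρ : ℕ) (γ α β : ℕ → ℕ) : Matrix (Fin (ρ+1)) (Fin (ρ+1)) ℝ :=
  Matrix.of fun i j =>
    if (j : ℕ) + 1 = (i : ℕ) then (γ (i : ℕ) : ℝ)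
    else if (i : ℕ) = (j : ℕ) then (α (i : ℕ) : ℝ)
    else if (i : ℕ) + 1 = (j : ℕ) then (β (i : ℕ) : ℝ)
    else 0



section DRGAux
set_option linter.unusedSectionVars false
set_option maxHeartbeats 1000000
variable {V : Type*} [Fintype V] {G : SimpleGraph V} {C : Set V} {Pa : Set (Set V)}
  {ρ : ℕ} {γ α β : ℕ → ℕ}

lemma distToCode_le {c : V} (hc : c ∈ C) (x : V) : distToCode G C x ≤ G.dist x c :=
  Nat.sInf_le ⟨c, hc, rfl⟩

lemma distToCode_exists (hC : C.Nonempty) (x : V) :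
    ∃ c ∈ C, G.dist x c = distToCode G C x := by
  obtain ⟨c, hc⟩ := hC
  exact Nat.sInf_mem (⟨_, c, hc, rfl⟩ : {d | ∃ c ∈ C, G.dist x c = d}.Nonempty)

lemma distToCode_eq_zero_of_mem {x : V} (hx : x ∈ C) : distToCode G C x = 0 :=
  Nat.le_zero.mp (by simpa [SimpleGraph.dist_self] using distToCode_le hx x)

lemma codeCell_zero (hconn : G.Connected) (hC : C.Nonempty) : codeCell G C 0 = C := by
  ext x
  constructor
  · intro h
    obtain ⟨c, hc, hd⟩ := distToCode_exists (G := G) hC x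
    have hx0 : distToCode G C x = 0 := h
    rw [hx0] at hd
    rwa [hconn.dist_eq_zero_iff.mp hd]
  · exact fun h => distToCode_eq_zero_of_mem h

lemma mem_codeCell {x : V} {i : ℕ} : x ∈ codeCell G C i ↔ distToCode G C x = i := Iff.rfl

lemma distToCode_le_succ (hconn : G.Connected) (hC : C.Nonempty) {x z : V} (h : G.Adj x z) :
    distToCode G C x ≤ distToCode G C z + 1 := by
  obtain ⟨c, hc, hd⟩ := distToCode_exists (G := G) hC z
  calc distToCode G C x ≤ G.dist x c := distToCode_le hc x
    _ ≤ G.dist x z + G.dist z c := hconn.dist_triangle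
    _ = distToCode G C z + 1 := by rw [hd, dist_eq_one_iff_adj.mpr h]; omega

lemma exists_adj_codeCell_pred (hconn : G.Connected) (hC : C.Nonempty) {x : V} {i : ℕ}
    (hx : distToCode G C x = i) (hi : 1 ≤ i) :
    ∃ z, G.Adj x z ∧ distToCode G C z = i - 1 := by
  obtain ⟨c, hc, hd⟩ := distToCode_exists (G := G) hC x
  rw [hx] at hd
  obtain ⟨w, hw⟩ := (hconn x c).exists_walk_length_eq_dist
  rw [hd] at hw
  cases w with
  | nil => simp at hw; omega
  | @cons _ z _ hxz w' =>
    refine ⟨z, hxz, ?_⟩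
    have h1 : distToCode G C z ≤ i - 1 := by
      have := (distToCode_le hc z).trans (SimpleGraph.dist_le w')
      simp [SimpleGraph.Walk.length_cons] at hw
      omega
    have h2 : i ≤ distToCode G C z + 1 := hx ▸ distToCode_le_succ hconn hC hxz
    omega

lemma cell_nonempty (hpart : Setoid.IsPartition Pa) {P : Set V} (hP : P ∈ Pa) : P.Nonempty :=
  Set.nonempty_iff_ne_empty.mpr (fun h => hpart.1 (h ▸ hP))

lemma cell_eq (hpart : Setoid.IsPartition Pa) {P P' : Set V} {x : V} (hP : P ∈ Pa)
    (hP' : P' ∈ Pa) (hx : x ∈ P) (hx' : x ∈ P') : P = P' := by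
  obtain ⟨Q, hQ, hun⟩ := hpart.2 x
  rw [hun P ⟨hP, hx⟩, hun P' ⟨hP', hx'⟩]

lemma exists_cell (hpart : Setoid.IsPartition Pa) (x : V) : ∃ P ∈ Pa, x ∈ P := by
  obtain ⟨Q, ⟨hQ, hxQ⟩, -⟩ := hpart.2 x
  exact ⟨Q, hQ, hxQ⟩

lemma nbrCount_pos_iff {x : V} {S : Set V} :
    0 < nbrCount G x S ↔ (G.neighborSet x ∩ S).Nonempty := Set.ncard_pos (Set.toFinite _)

/-- Key structural lemma: `distToCode` to a cell is constant on every cell. -/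
lemma cell_const (hconn : G.Connected) (hpart : Setoid.IsPartition Pa)
    (heq : IsEquitable G Pa) {P : Set V} (hP : P ∈ Pa) :
    ∀ i, ∀ P' ∈ Pa, ∀ x ∈ P', distToCode G P x = i → ∀ y ∈ P', distToCode G P y = i := by
  intro i
  induction i using Nat.strong_induction_on with
  | _ i IH =>
    intro P' hP' x hx hxi y hy
    have hPne : P.Nonempty := cell_nonempty hpart hP
    -- first: distToCode G P y ≤ i
    have hle : distToCode G P y ≤ i := by
      rcases Nat.eq_zero_or_pos i with h0 | h1
      · subst h0
        have hxP : x ∈ P := by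
          have := codeCell_zero (C := P) hconn hPne
          rw [← this]; exact hxi
        have : P' = P := cell_eq hpart hP' hP hx hxP
        subst this
        simp [distToCode_eq_zero_of_mem hy]
      · obtain ⟨z, hxz, hz⟩ := exists_adj_codeCell_pred hconn hPne hxi h1
        obtain ⟨Q, hQ, hzQ⟩ := exists_cell hpart z
        have hQsub : ∀ w ∈ Q, distToCode G P w = i - 1 :=
          IH (i - 1) (by omega) Q hQ z hzQ hz
        have hx1 : 0 < nbrCount G x Q := nbrCount_pos_iff.mpr ⟨z, hxz, hzQ⟩
        have hy1 : 0 < nbrCount G y Q := by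
          rw [heq P' hP' Q hQ y hy x hx]; exact hx1
        obtain ⟨z', hyz', hz'Q⟩ := nbrCount_pos_iff.mp hy1
        have := distToCode_le_succ (C := P) hconn hPne hyz'
        rw [hQsub z' hz'Q] at this
        omega
    -- then: not less
    rcases lt_or_eq_of_le hle with hlt | heqq
    · have := IH _ hlt P' hP' y hy rfl x hx
      omega
    · exact heqq

/-- If `x ∉ Q` is adjacent to some vertex of a cell `Q`, it has exactly `γ 1` neighbors in `Q`. -/
lemma nbrCount_of_adj_cell (hconn : G.Connected) (hρ : 1 ≤ ρ)
    (hnums : ∀ P ∈ Pa, HasIntNums G P ρ γ α β)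
    {Q : Set V} (hQ : Q ∈ Pa) (hQne : Q.Nonempty) {x y : V} (hx : x ∉ Q) (hy : y ∈ Q)
    (hxy : G.Adj x y) : nbrCount G x Q = γ 1 := by
  have h1 : distToCode G Q x = 1 := by
    have hle : distToCode G Q x ≤ 1 :=
      (distToCode_le hy x).trans (le_of_eq (dist_eq_one_iff_adj.mpr hxy))
    have hne : distToCode G Q x ≠ 0 := by
      intro h
      apply hx
      rw [← codeCell_zero (C := Q) hconn hQne]
      exact h
    omega
  have := ((hnums Q hQ).2.2 1 hρ x h1).1 le_rfl
  rwa [show (1:ℕ) - 1 = 0 from rfl, codeCell_zero hconn hQne] at this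

/-- A vertex of a cell has exactly `α 0` neighbors inside its own cell. -/
lemma nbrCount_own_cell (hconn : G.Connected) (hnums : ∀ P ∈ Pa, HasIntNums G P ρ γ α β)
    {Q : Set V} (hQ : Q ∈ Pa) {x : V} (hx : x ∈ Q) : nbrCount G x Q = α 0 := by
  have hQne : Q.Nonempty := ⟨x, hx⟩
  have h0 : x ∈ codeCell G Q 0 := distToCode_eq_zero_of_mem hx
  have := ((hnums Q hQ).2.2 0 (Nat.zero_le _) x h0).2.1
  rwa [codeCell_zero hconn hQne] at this

/-- The central counting lemma. -/
lemma count_lemma (hconn : G.Connected) (hρ : 1 ≤ ρ) (hpart : Setoid.IsPartition Pa)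
    (heq : IsEquitable G Pa) (hnums : ∀ P ∈ Pa, HasIntNums G P ρ γ α β)
    {P P' : Set V} (hP : P ∈ Pa) (hP' : P' ∈ Pa) {x : V} (hx : x ∈ P') (j : ℕ) :
    (G.neighborSet x ∩ (codeCell G P j \ P')).ncard =
      γ 1 * {Q | Q ∈ Pa ∧ Q ≠ P' ∧ Q ⊆ codeCell G P j ∧
        (G.neighborSet x ∩ Q).Nonempty}.ncard := by
  classical
  set 𝒮 := {Q | Q ∈ Pa ∧ Q ≠ P' ∧ Q ⊆ codeCell G P j ∧ (G.neighborSet x ∩ Q).Nonempty} with h𝒮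
  set A : Set V := G.neighborSet x ∩ (codeCell G P j \ P') with hA
  -- the cell of each vertex
  have hcell : ∀ a : V, ∃ Q, (Q ∈ Pa ∧ a ∈ Q) := fun a => exists_cell hpart a
  choose f hf1 hf2 using hcell
  have hfmem : ∀ a ∈ A, f a ∈ 𝒮 := by
    rintro a ⟨ha1, ha2, ha3⟩
    refine ⟨hf1 a, ?_, ?_, ⟨a, ha1, hf2 a⟩⟩
    · intro h; exact ha3 (h ▸ hf2 a)
    · intro w hw
      exact cell_const hconn hpart heq hP j (f a) (hf1 a) a (hf2 a) ha2 w hw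
  -- fibers
  have hfiber : ∀ Q ∈ 𝒮, {a ∈ A | f a = Q} = G.neighborSet x ∩ Q := by
    rintro Q ⟨hQPa, hQne', hQsub, hQadj⟩
    ext a
    constructor
    · rintro ⟨⟨ha1, -, -⟩, hfa⟩
      exact ⟨ha1, hfa ▸ hf2 a⟩
    · rintro ⟨ha1, haQ⟩
      have hfa : f a = Q := cell_eq hpart (hf1 a) hQPa (hf2 a) haQ
      refine ⟨⟨ha1, hQsub haQ, ?_⟩, hfa⟩
      intro haP'
      exact hQne' (cell_eq hpart hQPa hP' haQ haP')
  -- each fiber has ncard γ 1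
  have hfibcard : ∀ Q ∈ 𝒮, (G.neighborSet x ∩ Q).ncard = γ 1 := by
    rintro Q ⟨hQPa, hQne', hQsub, y, hy1, hy2⟩
    have hxQ : x ∉ Q := fun h => hQne' (cell_eq hpart hQPa hP' h hx)
    exact nbrCount_of_adj_cell hconn hρ hnums hQPa ⟨y, hy2⟩ hxQ hy2 hy1
  -- sum over finsets
  have hAfin : A.Finite := Set.toFinite _
  have h𝒮fin : 𝒮.Finite := Set.toFinite _
  rw [Set.ncard_eq_toFinset_card _ hAfin, Set.ncard_eq_toFinset_card _ h𝒮fin]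
  rw [Finset.card_eq_sum_card_fiberwise (f := f) (t := h𝒮fin.toFinset)
    (fun a ha => h𝒮fin.mem_toFinset.mpr (hfmem a (hAfin.mem_toFinset.mp ha)))]
  rw [Finset.sum_congr rfl (fun Q hQ => ?_), Finset.sum_const, smul_eq_mul, mul_comm]
  have hQ𝒮 : Q ∈ 𝒮 := h𝒮fin.mem_toFinset.mp hQ
  have : (hAfin.toFinset.filter fun a => f a = Q) =
      ((G.neighborSet x ∩ Q).toFinite).toFinset := by
    ext a
    simp only [Finset.mem_filter, Set.Finite.mem_toFinset]
    constructor
    · rintro ⟨h1, h2⟩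
      have := hfiber Q hQ𝒮
      rw [← this]; exact ⟨h1, h2⟩
    · intro h
      have := hfiber Q hQ𝒮
      rw [← this] at h; exact h
  rw [this, ← Set.ncard_eq_toFinset_card _ _, hfibcard Q hQ𝒮]

lemma distToCode_le_covRad (x : V) : distToCode G C x ≤ covRad G C := by
  have hfin : {d | ∃ x, distToCode G C x = d}.Finite := by
    have : {d | ∃ x, distToCode G C x = d} = Set.range (distToCode G C) := by
      ext d; simp [Set.range, eq_comm]
    rw [this]; exact Set.finite_range _
  exact le_csSup hfin.bddAbove ⟨x, rfl⟩

lemma shell_nonempty (hconn : G.Connected) (hC : C.Nonempty) {ρ : ℕ} (hcr : covRad G C = ρ)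
    {i : ℕ} (hi : i ≤ ρ) : ∃ x, distToCode G C x = i := by
  have hfin : {d | ∃ x, distToCode G C x = d}.Finite := by
    have : {d | ∃ x, distToCode G C x = d} = Set.range (distToCode G C) := by
      ext d; simp [Set.range, eq_comm]
    rw [this]; exact Set.finite_range _
  have hne : Nonempty V := hconn.nonempty
  obtain ⟨x₀⟩ := hne
  have htop : ∃ x, distToCode G C x = ρ := by
    have := Nat.sSup_mem (s := {d | ∃ x, distToCode G C x = d}) ⟨_, x₀, rfl⟩ hfin.bddAbove
    rwa [show sSup {d | ∃ x, distToCode G C x = d} = ρ from hcr] at this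
  -- downward induction
  have key : ∀ k, k ≤ ρ → ∃ x, distToCode G C x = ρ - k := by
    intro k
    induction k with
    | zero => intro _; simpa using htop
    | succ n IH =>
      intro hn
      obtain ⟨x, hx⟩ := IH (by omega)
      obtain ⟨z, -, hz⟩ := exists_adj_codeCell_pred hconn hC hx (by omega)
      exact ⟨z, by rw [hz]; omega⟩
  obtain ⟨x, hx⟩ := key (ρ - i) (by omega)
  exact ⟨x, by rw [hx]; omega⟩


lemma quot_reachable_dist_le (hconn : G.Connected) (hpart : Setoid.IsPartition Pa)
    (heq : IsEquitable G Pa) (P : Pa) :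
    ∀ i, ∀ P' : Pa, (P' : Set V) ⊆ codeCell G P i →
      (quotientGraph G Pa).Reachable P P' ∧ (quotientGraph G Pa).dist P P' ≤ i := by
  intro i
  induction i with
  | zero =>
    intro P' hsub
    obtain ⟨x, hx⟩ := cell_nonempty hpart P'.2
    have hxP : x ∈ (P : Set V) := by
      rw [← codeCell_zero hconn (cell_nonempty hpart P.2)]; exact hsub hx
    have : P = P' := Subtype.ext (cell_eq hpart P.2 P'.2 hxP hx)
    subst this
    exact ⟨Reachable.refl _, by simp⟩
  | succ n IH =>
    intro P' hsub
    obtain ⟨x, hx⟩ := cell_nonempty hpart P'.2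
    have hxv : distToCode G P x = n + 1 := hsub hx
    obtain ⟨z, hxz, hz⟩ := exists_adj_codeCell_pred hconn (cell_nonempty hpart P.2) hxv
      (by omega)
    simp only [Nat.add_sub_cancel] at hz
    obtain ⟨Q, hQ, hzQ⟩ := exists_cell hpart z
    have hQsub : (Q : Set V) ⊆ codeCell G P n := fun w hw =>
      cell_const hconn hpart heq P.2 n Q hQ z hzQ hz w hw
    obtain ⟨hreach, hdist⟩ := IH ⟨Q, hQ⟩ hQsub
    have hQP' : (⟨Q, hQ⟩ : Pa) ≠ P' := by
      intro h
      have hz' : z ∈ (P' : Set V) := h ▸ hzQ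
      have h2 : distToCode G P z = n + 1 := hsub hz'
      omega
    have hadj : (quotientGraph G Pa).Adj ⟨Q, hQ⟩ P' :=
      ⟨hQP', z, hzQ, x, hx, hxz.symm⟩
    refine ⟨hreach.trans hadj.reachable, ?_⟩
    obtain ⟨w, hw⟩ := hreach.exists_walk_length_eq_dist
    have := SimpleGraph.dist_le (w.concat hadj)
    rw [SimpleGraph.Walk.length_concat, hw] at this
    omega

lemma quot_walk_lower (hconn : G.Connected) (hpart : Setoid.IsPartition Pa)
    (heq : IsEquitable G Pa) (P : Pa) :
    ∀ {Z Z' : Pa} (W : (quotientGraph G Pa).Walk Z Z') (j j' : ℕ),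
      (Z : Set V) ⊆ codeCell G P j → (Z' : Set V) ⊆ codeCell G P j' →
      j' ≤ j + W.length := by
  intro Z Z' W
  induction W with
  | @nil Z0 =>
    intro j j' h1 h2
    obtain ⟨x, hx⟩ := cell_nonempty hpart Z0.2
    have := h1 hx
    have := h2 hx
    simp only [codeCell, Set.mem_setOf_eq] at *
    omega
  | @cons Z0 Y Z1 hadj W IH =>
    intro j j' h1 h2
    obtain ⟨-, x, hxZ, y, hyY, hxy⟩ := hadj
    set k := distToCode G P y with hk
    have hYsub : (Y : Set V) ⊆ codeCell G P k := fun w hw =>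
      cell_const hconn hpart heq P.2 k Y Y.2 y hyY rfl w hw
    have hkj : k ≤ j + 1 := by
      have hxj : distToCode G P x = j := h1 hxZ
      have := distToCode_le_succ (C := (P : Set V)) hconn (cell_nonempty hpart P.2) hxy.symm
      omega
    have := IH k j' hYsub h2
    show j' ≤ j + (W.length + 1)
    omega

lemma quot_dist_eq (hconn : G.Connected) (hpart : Setoid.IsPartition Pa)
    (heq : IsEquitable G Pa) (P P' : Pa) {j : ℕ} (hsub : (P' : Set V) ⊆ codeCell G P j) :
    (quotientGraph G Pa).dist P P' = j := by
  obtain ⟨hreach, hle⟩ := quot_reachable_dist_le hconn hpart heq P j P' hsub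
  obtain ⟨w, hw⟩ := hreach.exists_walk_length_eq_dist
  have hPsub : (P : Set V) ⊆ codeCell G P 0 := by
    rw [codeCell_zero hconn (cell_nonempty hpart P.2)]
  have := quot_walk_lower hconn hpart heq P w 0 j hPsub hsub
  omega

lemma shell_set_eq (hconn : G.Connected) (hpart : Setoid.IsPartition Pa)
    (heq : IsEquitable G Pa) (P : Pa) (j : ℕ) :
    {Z : Pa | (quotientGraph G Pa).dist P Z = j} =
      {Z : Pa | (Z : Set V) ⊆ codeCell G P j} := by
  ext Z
  simp only [Set.mem_setOf_eq]
  constructor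
  · intro h
    obtain ⟨x, hx⟩ := cell_nonempty hpart Z.2
    have hsub : (Z : Set V) ⊆ codeCell G P (distToCode G P x) := fun w hw =>
      cell_const hconn hpart heq P.2 _ Z Z.2 x hx rfl w hw
    have hd := quot_dist_eq hconn hpart heq P Z hsub
    rw [h] at hd
    rw [hd]
    exact hsub

  · exact fun h => quot_dist_eq hconn hpart heq P Z h

lemma quot_nbr_card (hpart : Setoid.IsPartition Pa) (heq : IsEquitable G Pa)
    (P P' : Pa) {x : V} (hx : x ∈ (P' : Set V)) (j : ℕ) :
    ((quotientGraph G Pa).neighborSet P' ∩ {Z : Pa | (Z : Set V) ⊆ codeCell G P j}).ncard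
      = {Q | Q ∈ Pa ∧ Q ≠ (P' : Set V) ∧ Q ⊆ codeCell G P j ∧
          (G.neighborSet x ∩ Q).Nonempty}.ncard := by
  rw [← Set.ncard_image_of_injective _ (Subtype.val_injective
    (p := fun S => S ∈ Pa))]
  congr 1
  ext Q
  simp only [Set.mem_image, Set.mem_inter_iff, SimpleGraph.mem_neighborSet, Set.mem_setOf_eq]
  constructor
  · rintro ⟨Z, ⟨⟨hne, a, ha, b, hb, hab⟩, hsub⟩, rfl⟩
    refine ⟨Z.2, fun h => hne (Subtype.ext h.symm), hsub, ?_⟩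
    have hpos : 0 < nbrCount G a (Z : Set V) := nbrCount_pos_iff.mpr ⟨b, hab, hb⟩
    have heqn := heq (P' : Set V) P'.2 (Z : Set V) Z.2 a ha x hx
    rw [heqn] at hpos
    exact nbrCount_pos_iff.mp hpos
  · rintro ⟨hQPa, hQne, hQsub, y, hy1, hy2⟩
    exact ⟨⟨Q, hQPa⟩, ⟨⟨fun h => hQne (congrArg Subtype.val h).symm, x, hx, y, hy2, hy1⟩,
      hQsub⟩, rfl⟩

lemma local_counts (hconn : G.Connected) (hρ : 1 ≤ ρ) (hpart : Setoid.IsPartition Pa)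
    (heq : IsEquitable G Pa) (hnums : ∀ P ∈ Pa, HasIntNums G P ρ γ α β)
    (P P' : Pa) {x : V} (hx : x ∈ (P' : Set V)) {i : ℕ} (hi : i ≤ ρ)
    (hxi : distToCode G P x = i) :
    (1 ≤ i → γ i = γ 1 *
      nbrCount (quotientGraph G Pa) P' {Z | (quotientGraph G Pa).dist P Z = i - 1}) ∧
    (α i = α 0 + γ 1 *
      nbrCount (quotientGraph G Pa) P' {Z | (quotientGraph G Pa).dist P Z = i}) ∧
    (i < ρ → β i = γ 1 *
      nbrCount (quotientGraph G Pa) P' {Z | (quotientGraph G Pa).dist P Z = i + 1}) := by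
  have hP'sub : (P' : Set V) ⊆ codeCell G P i := fun w hw =>
    cell_const hconn hpart heq P.2 i P' P'.2 x hx hxi w hw
  -- quotient neighbor counts equal cell counts
  have hqc : ∀ j : ℕ, nbrCount (quotientGraph G Pa) P' {Z | (quotientGraph G Pa).dist P Z = j}
      = {Q | Q ∈ Pa ∧ Q ≠ (P' : Set V) ∧ Q ⊆ codeCell G P j ∧
          (G.neighborSet x ∩ Q).Nonempty}.ncard := by
    intro j
    unfold nbrCount
    rw [shell_set_eq hconn hpart heq P j]
    exact quot_nbr_card hpart heq P P' hx j
  -- off-shell: the diff is trivial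
  have hdiff : ∀ j : ℕ, j ≠ i →
      G.neighborSet x ∩ (codeCell G P j \ (P' : Set V)) =
        G.neighborSet x ∩ codeCell G P j := by
    intro j hj
    ext w
    simp only [Set.mem_inter_iff, Set.mem_diff]
    constructor
    · rintro ⟨h1, h2, -⟩; exact ⟨h1, h2⟩
    · rintro ⟨h1, h2⟩
      refine ⟨h1, h2, fun hw => hj ?_⟩
      have hwi : distToCode G P w = i := hP'sub hw
      have hwj : distToCode G P w = j := h2
      omega
  have hoff : ∀ j : ℕ, j ≠ i → nbrCount G x (codeCell G P j) =
      γ 1 * nbrCount (quotientGraph G Pa) P' {Z | (quotientGraph G Pa).dist P Z = j} := by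
    intro j hj
    rw [hqc j, ← count_lemma hconn hρ hpart heq hnums P.2 P'.2 hx j]
    unfold nbrCount
    rw [hdiff j hj]
  -- on-shell split
  have hon : nbrCount G x (codeCell G P i) =
      α 0 + γ 1 * nbrCount (quotientGraph G Pa) P' {Z | (quotientGraph G Pa).dist P Z = i} := by
    have hsplit : G.neighborSet x ∩ codeCell G P i =
        (G.neighborSet x ∩ (P' : Set V)) ∪
          (G.neighborSet x ∩ (codeCell G P i \ (P' : Set V))) := by
      ext w
      simp only [Set.mem_inter_iff, Set.mem_union, Set.mem_diff]
      constructor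
      · rintro ⟨h1, h2⟩
        by_cases hw : w ∈ (P' : Set V)
        · exact Or.inl ⟨h1, hw⟩
        · exact Or.inr ⟨h1, h2, hw⟩
      · rintro (⟨h1, h2⟩ | ⟨h1, h2, -⟩)
        · exact ⟨h1, hP'sub h2⟩
        · exact ⟨h1, h2⟩
    have hdisj : Disjoint (G.neighborSet x ∩ (P' : Set V))
        (G.neighborSet x ∩ (codeCell G P i \ (P' : Set V))) := by
      rw [Set.disjoint_left]
      rintro w ⟨-, h1⟩ ⟨-, -, h2⟩
      exact h2 h1
    unfold nbrCount
    rw [hsplit, Set.ncard_union_eq hdisj (Set.toFinite _) (Set.toFinite _)]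
    congr 1
    · exact nbrCount_own_cell hconn hnums P'.2 hx
    · rw [shell_set_eq hconn hpart heq P i, quot_nbr_card hpart heq P P' hx i,
        ← count_lemma hconn hρ hpart heq hnums P.2 P'.2 hx i]
  have hx' : x ∈ codeCell G P i := hxi
  obtain ⟨hγi, hαi, hβi⟩ := (hnums P P.2).2.2 i hi x hx'
  refine ⟨fun h1 => ?_, ?_, fun hlt => ?_⟩
  · rw [← hγi h1, hoff (i-1) (by omega)]
  · rw [← hαi, hon]
  · rw [← hβi hlt, hoff (i+1) (by omega)]

end DRGAux

/-- the quotient of a distance-regular graph by a completely regular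
partition is distance-regular of diameter `ρ`, with `c_i = γ_i/γ_1`, `b_i = β_i/γ_1`,
`a_i = (α_i - α_0)/γ_1`, and in particular `c_1 = 1`. -/
theorem quotient_is_distRegular {V : Type*} [Fintype V] (G : SimpleGraph V)
    (D : ℕ) (b0 c0 : ℕ → ℕ) (hDRG : IsDistRegular G D b0 c0)
    (Pa : Set (Set V)) (ρ : ℕ) (hρ : 1 ≤ ρ) (γ α β : ℕ → ℕ)
    (hPa : IsCompRegPartition G Pa ρ γ α β) :
    ∃ b c a : ℕ → ℕ,
      (∀ i ≤ ρ, γ 1 * c i = γ i ∧ γ 1 * b i = β i ∧ γ 1 * a i + α 0 = α i) ∧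
      c 1 = 1 ∧
      IsDistRegular (quotientGraph G Pa) ρ b c := by
  classical
  obtain ⟨hconn, -⟩ := hDRG
  obtain ⟨hpart, heq, hcells⟩ := hPa
  have hnums : ∀ P ∈ Pa, HasIntNums G P ρ γ α β := fun P hP => (hcells P hP).2.2
  have hcr : ∀ P ∈ Pa, covRad G P = ρ := fun P hP => (hcells P hP).2.1
  have hVne : Nonempty V := hconn.nonempty
  obtain ⟨x₀⟩ := hVne
  obtain ⟨P₀, hP₀, -⟩ := exists_cell hpart x₀
  have hP₀ne : (P₀ : Set V).Nonempty := cell_nonempty hpart hP₀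
  -- γ 1 is positive
  have hγpos : 0 < γ 1 := by
    obtain ⟨x, hx⟩ := shell_nonempty hconn hP₀ne (hcr P₀ hP₀) hρ
    obtain ⟨z, hxz, hz⟩ := exists_adj_codeCell_pred hconn hP₀ne hx le_rfl
    have hg := ((hnums P₀ hP₀).2.2 1 hρ x hx).1 le_rfl
    rw [← hg]
    exact nbrCount_pos_iff.mpr ⟨z, hxz, hz⟩
  -- witnesses on every shell
  have hwit : ∀ i, i ≤ ρ → ∃ (P P' : Pa) (x : V),
      x ∈ (P' : Set V) ∧ distToCode G (P : Set V) x = i := by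
    intro i hi
    obtain ⟨x, hx⟩ := shell_nonempty hconn hP₀ne (hcr P₀ hP₀) hi
    obtain ⟨P', hP', hxP'⟩ := exists_cell hpart x
    exact ⟨⟨P₀, hP₀⟩, ⟨P', hP'⟩, x, hxP', hx⟩
  -- multiplicative relations
  have hmul : ∀ i ≤ ρ, γ 1 * (γ i / γ 1) = γ i ∧ γ 1 * (β i / γ 1) = β i ∧
      (γ 1 * ((α i - α 0) / γ 1) + α 0 = α i) := by
    intro i hi
    obtain ⟨P, P', x, hx, hxi⟩ := hwit i hi
    obtain ⟨lc1, lc2, lc3⟩ := local_counts hconn hρ hpart heq hnums P P' hx hi hxi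
    refine ⟨?_, ?_, ?_⟩
    · rcases Nat.eq_zero_or_pos i with h0 | h1
      · subst h0; rw [(hnums P₀ hP₀).1]; simp
      · rw [lc1 h1, Nat.mul_div_cancel_left _ hγpos]
    · rcases Nat.lt_or_ge i ρ with hlt | hge
      · rw [lc3 hlt, Nat.mul_div_cancel_left _ hγpos]
      · have : i = ρ := by omega
        subst this
        rw [(hnums P₀ hP₀).2.1]; simp
    · set n := nbrCount (quotientGraph G Pa) P'
        {Z | (quotientGraph G Pa).dist P Z = i} with hn
      have h' : α i - α 0 = γ 1 * n := by omega
      rw [h', Nat.mul_div_cancel_left _ hγpos]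
      omega
  -- distance facts
  have hsubof : ∀ P P' : Pa, ∃ j ≤ ρ, (P' : Set V) ⊆ codeCell G (P : Set V) j ∧
      (quotientGraph G Pa).dist P P' = j := by
    intro P P'
    obtain ⟨x, hx⟩ := cell_nonempty hpart P'.2
    have hsub : (P' : Set V) ⊆ codeCell G (P : Set V) (distToCode G (P : Set V) x) :=
      fun w hw => cell_const hconn hpart heq P.2 _ P' P'.2 x hx rfl w hw
    refine ⟨distToCode G (P : Set V) x, ?_, hsub, quot_dist_eq hconn hpart heq P P' hsub⟩
    rw [← hcr P P.2]
    exact distToCode_le_covRad x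
  refine ⟨fun i => β i / γ 1, fun i => γ i / γ 1, fun i => (α i - α 0) / γ 1,
    fun i hi => ⟨(hmul i hi).1, (hmul i hi).2.1, (hmul i hi).2.2⟩,
    Nat.div_self hγpos, ?_, ?_, ?_, ?_⟩
  · -- connectivity
    have : Nonempty Pa := ⟨⟨P₀, hP₀⟩⟩
    refine ⟨fun P P' => ?_⟩
    obtain ⟨j, hj, hsub, -⟩ := hsubof P P'
    exact (quot_reachable_dist_le hconn hpart heq P j P' hsub).1
  · -- diameter bound
    intro P P'
    obtain ⟨j, hj, -, hd⟩ := hsubof P P'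
    omega
  · -- diameter attained
    obtain ⟨x, hx⟩ := shell_nonempty hconn hP₀ne (hcr P₀ hP₀) (le_refl ρ)
    obtain ⟨P', hP', hxP'⟩ := exists_cell hpart x
    have hsub : (P' : Set V) ⊆ codeCell G (P₀ : Set V) ρ :=
      fun w hw => cell_const hconn hpart heq hP₀ ρ P' hP' x hxP' hx w hw
    exact ⟨⟨P₀, hP₀⟩, ⟨P', hP'⟩, quot_dist_eq hconn hpart heq ⟨P₀, hP₀⟩ ⟨P', hP'⟩ hsub⟩
  · -- regularity
    intro i hi P P' hd
    obtain ⟨j, hj, hsub, hdj⟩ := hsubof P P'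
    have hij : j = i := by omega
    subst hij
    obtain ⟨x, hx⟩ := cell_nonempty hpart P'.2
    have hxi : distToCode G (P : Set V) x = j := hsub hx
    obtain ⟨lc1, lc2, lc3⟩ := local_counts hconn hρ hpart heq hnums P P' hx hj hxi
    constructor
    · intro h1
      refine Nat.eq_of_mul_eq_mul_left hγpos ?_
      calc γ 1 * nbrCount (quotientGraph G Pa) P'
            {z | (quotientGraph G Pa).dist P z = j - 1} = γ j := (lc1 h1).symm
        _ = γ 1 * (γ j / γ 1) := ((hmul j hj).1).symm
    · intro hlt
      refine Nat.eq_of_mul_eq_mul_left hγpos ?_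
      calc γ 1 * nbrCount (quotientGraph G Pa) P'
            {z | (quotientGraph G Pa).dist P z = j + 1} = β j := (lc3 hlt).symm
        _ = γ 1 * (β j / γ 1) := ((hmul j hj).2.1).symm
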